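/- arXiv:2110.05279 — 2 statements merged into one kernel-verified Lean document; each statement's English description precedes it below -/
import Mathlib

section
/- Let g(t) = ∫_0^r (1/(2α)) 1{|t| ≤ α} dρ(α) for a probability measure ρ on [0,r], and let g' be the density obtained by moving mass ε of ρ from a point α to a point α' > α. Then the differential entropy does not decrease: H(g') ≥ H(g). -/
open MeasureTheory ProbabilityTheory Real
open scoped ENNReal ProbabilityTheory

noncomputable section

abbrev Ed (d : ℕ) : Type := EuclideanSpace ℝ (Fin d)

open Classical in
/-- Kullback-Leibler divergence, set to `∞` when the first measure is not absolutely
continuous w.r.t. the second or the log-likelihood ratio is not integrable. -/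
def klD {α : Type*} [MeasurableSpace α] (μ ν : Measure α) : ℝ≥0∞ :=
  if μ ≪ ν ∧ Integrable (llr μ ν) μ then ENNReal.ofReal (∫ x, llr μ ν x ∂μ) else ⊤

/-- Mutual information between two random variables. -/
def MI {Ω α β : Type*} [MeasurableSpace Ω] [MeasurableSpace α] [MeasurableSpace β]
    (μ : Measure Ω) (A : Ω → α) (B : Ω → β) : ℝ≥0∞ :=
  klD (μ.map fun ω => (A ω, B ω)) ((μ.map A).prod (μ.map B))

/-- Uniform distribution on the unit sphere of `ℝ^d`, viewed as a measure on
the ambient space (normalized surface measure). -/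
def sphereUnif (d : ℕ) : Measure (Ed d) :=
  if d = 0 then Measure.dirac 0 else
    ((volume : Measure (Ed d)).toSphere Set.univ)⁻¹ •
      ((volume : Measure (Ed d)).toSphere.map Subtype.val)

instance sphereUnif.isProbabilityMeasure (d : ℕ) : IsProbabilityMeasure (sphereUnif d) := by
  constructor
  rcases Nat.eq_zero_or_pos d with h | h
  · subst h; simp [sphereUnif]
  · rw [sphereUnif, if_neg h.ne', Measure.smul_apply,
      Measure.map_apply measurable_subtype_coe MeasurableSet.univ]
    simp only [Set.preimage_univ, smul_eq_mul]
    refine ENNReal.inv_mul_cancel ?_ (measure_ne_top _ _)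
    rw [Measure.toSphere_apply_univ]
    refine mul_ne_zero ?_ (Metric.measure_ball_pos _ _ one_pos).ne'
    simp [finrank_euclideanSpace_fin, h.ne']

/-- Sliced mutual information. -/
def SMI {Ω : Type*} [MeasurableSpace Ω] {dx dy : ℕ} (μ : Measure Ω)
    (X : Ω → Ed dx) (Y : Ω → Ed dy) : ℝ≥0∞ :=
  ∫⁻ θ, ∫⁻ φ, MI μ (fun ω => (inner ℝ θ (X ω) : ℝ)) (fun ω => (inner ℝ φ (Y ω) : ℝ))
    ∂(sphereUnif dy) ∂(sphereUnif dx)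

/-- Conditional mutual information `I(A;B|C)`. -/
def condMI {Ω α β γ : Type*} [MeasurableSpace Ω] [MeasurableSpace α] [MeasurableSpace β]
    [MeasurableSpace γ] [StandardBorelSpace α] [Nonempty α] [StandardBorelSpace β] [Nonempty β]
    (μ : Measure Ω) [IsFiniteMeasure μ] (A : Ω → α) (B : Ω → β) (C : Ω → γ) : ℝ≥0∞ :=
  haveI : IsFiniteMeasure (μ.map fun ω => (C ω, A ω)) := μ.isFiniteMeasure_map _
  haveI : IsFiniteMeasure (μ.map fun ω => (C ω, B ω)) := μ.isFiniteMeasure_map _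
  klD (μ.map fun ω => (C ω, (A ω, B ω)))
    ((μ.map C) ⊗ₘ
      ((μ.map fun ω => (C ω, A ω)).condKernel ×ₖ (μ.map fun ω => (C ω, B ω)).condKernel))

/-- Differential entropy of a distribution on `ℝ`. -/
def dEnt (ν : Measure ℝ) : ℝ := ∫ x, Real.negMulLog ((ν.rnDeriv volume x).toReal)

/-- Sliced entropy of a distribution on `ℝ^d`. -/
def SH {d : ℕ} (P : Measure (Ed d)) : ℝ :=
  ∫ θ, dEnt (P.map fun x => (inner ℝ θ x : ℝ)) ∂(sphereUnif d)


namespace RMTaux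
open Set

lemma gibbs (x y : ℝ) (hx : 0 < x) (hy : 0 ≤ y) :
    negMulLog y ≤ negMulLog x + (x - y) * (log x + 1) := by
  rcases eq_or_lt_of_le hy with h | hy'
  · simp only [← h, negMulLog, neg_mul, Real.log_zero, mul_zero, neg_zero, sub_zero]
    nlinarith [Real.log_le_sub_one_of_pos hx]
  · have h1 : Real.log (x / y) ≤ x / y - 1 := Real.log_le_sub_one_of_pos (by positivity)
    have h2 : Real.log (x / y) = Real.log x - Real.log y := Real.log_div hx.ne' hy'.ne'
    simp only [negMulLog]
    have := mul_le_mul_of_nonneg_left h1 hy'.le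
    rw [h2] at this
    have hxy : y * (x / y - 1) = x - y := by field_simp
    nlinarith

lemma negMulLog_abs_le (y : ℝ) (hy : 0 ≤ y) : |negMulLog y| ≤ 1 + y^2 := by
  rcases eq_or_lt_of_le hy with h | hy'
  · simp [← h]
  have hinv : y * y⁻¹ = 1 := mul_inv_cancel₀ hy'.ne'
  rcases le_total y 1 with h1 | h1
  · have h2 : Real.log y⁻¹ ≤ y⁻¹ - 1 := Real.log_le_sub_one_of_pos (by positivity)
    rw [Real.log_inv] at h2
    have hln : Real.log y ≤ 0 := Real.log_nonpos hy h1
    have h3 := mul_le_mul_of_nonneg_left h2 hy'.le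
    rw [abs_le]
    constructor <;> simp only [negMulLog, neg_mul] <;>
      nlinarith
  · have h2 : Real.log y ≤ y - 1 := Real.log_le_sub_one_of_pos hy'
    have hln : 0 ≤ Real.log y := Real.log_nonneg h1
    have h3 := mul_le_mul_of_nonneg_left h2 hy'.le
    rw [abs_le]
    constructor <;> simp only [negMulLog, neg_mul] <;>
      nlinarith


lemma negMulLog_diff_le (c u v : ℝ) (hc : 0 < c) (hcv : c ≤ v) (hvu : v ≤ u) :
    |negMulLog u - negMulLog v| ≤ (u - v) * (1 + |log c| + |log u|) := by
  set C : ℝ := 1 + |log c| + |log u| with hC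
  have key : ‖negMulLog u - negMulLog v‖ ≤ C * ‖u - v‖ := by
    apply Convex.norm_image_sub_le_of_norm_hasDerivWithin_le
      (f' := fun x => -Real.log x - 1) (s := Icc c u)
    · intro x hx
      exact (Real.hasDerivAt_negMulLog (by linarith [hx.1] : x ≠ 0)).hasDerivWithinAt
    · intro x hx
      have hx0 : 0 < x := lt_of_lt_of_le hc hx.1
      have h1 : Real.log c ≤ Real.log x := Real.log_le_log hc hx.1
      have h2 : Real.log x ≤ Real.log u := Real.log_le_log hx0 hx.2
      rw [Real.norm_eq_abs]
      rcases abs_cases (Real.log c) with ⟨e1, _⟩ | ⟨e1, _⟩ <;>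
        rcases abs_cases (Real.log u) with ⟨e2, _⟩ | ⟨e2, _⟩ <;>
        rcases abs_cases (-Real.log x - 1) with ⟨e3, _⟩ | ⟨e3, _⟩ <;> simp [hC] <;> linarith
    · exact convex_Icc c u
    · exact ⟨hcv, hvu⟩
    · exact ⟨hcv.trans hvu, le_refl u⟩
  rw [Real.norm_eq_abs, Real.norm_eq_abs, abs_of_nonneg (by linarith : (0:ℝ) ≤ u - v)] at key
  linarith [key]

lemma integrable_abs_log (b : ℝ) (hb : 0 < b) :
    IntegrableOn (fun t : ℝ => |Real.log t|) (Ioo 0 b) := by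
  have hdom : ∀ t ∈ Ioo (0:ℝ) b, ‖|Real.log t|‖ ≤ 2 * t ^ (-(1/2 : ℝ)) + |Real.log b| := by
    intro t ht
    rw [Real.norm_eq_abs, abs_abs]
    have ht0 := ht.1
    rcases le_total t 1 with h1 | h1
    · have h2 : Real.log (t⁻¹) ≤ 2 * Real.sqrt t⁻¹ := by
        have h3 : Real.log (Real.sqrt t⁻¹) ≤ Real.sqrt t⁻¹ - 1 :=
          Real.log_le_sub_one_of_pos (Real.sqrt_pos.mpr (by positivity))
        rw [Real.log_sqrt (by positivity)] at h3
        linarith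
      have h4 : |Real.log t| = Real.log t⁻¹ := by
        rw [Real.log_inv, abs_of_nonpos (Real.log_nonpos ht0.le h1)]
      have h5 : Real.sqrt t⁻¹ = t ^ (-(1/2 : ℝ)) := by
        rw [Real.sqrt_eq_rpow, ← Real.rpow_neg_one t, ← Real.rpow_mul ht0.le]
        norm_num
      have h6 : (0:ℝ) ≤ |Real.log b| := abs_nonneg _
      rw [h4]
      rw [h5] at h2
      linarith
    · have : |Real.log t| = Real.log t := abs_of_nonneg (Real.log_nonneg h1)
      have h2 : Real.log t ≤ Real.log b := Real.log_le_log ht0 ht.2.le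
      have h3 : Real.log b ≤ |Real.log b| := le_abs_self _
      have h4 : (0:ℝ) ≤ 2 * t ^ (-(1/2 : ℝ)) := by positivity
      linarith
  refine Integrable.mono' ?_ (Real.measurable_log.abs.aestronglyMeasurable.restrict)
    ((ae_restrict_iff' measurableSet_Ioo).mpr (Filter.Eventually.of_forall hdom))
  apply Integrable.add
  · exact ((intervalIntegral.integrableOn_Ioo_rpow_iff hb).mpr (by norm_num)).const_mul 2
  · exact (integrableOn_const_iff).mpr (Or.inr (by rw [Real.volume_Ioo]; exact ENNReal.ofReal_lt_top))



lemma intervalIntegrable_abs_log_abs (b : ℝ) (hb : 0 < b) :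
    IntervalIntegrable (fun t : ℝ => |Real.log (|t|)|) volume (-b) b := by
  have hpos : IntervalIntegrable (fun t : ℝ => |Real.log (|t|)|) volume 0 b := by
    rw [intervalIntegrable_iff_integrableOn_Ioo_of_le hb.le]
    exact (integrable_abs_log b hb).congr_fun (fun t ht => by rw [abs_of_pos ht.1])
      measurableSet_Ioo
  have hneg : IntervalIntegrable (fun t : ℝ => |Real.log (|t|)|) volume (-b) 0 := by
    have := ((IntervalIntegrable.iff_comp_neg).mp hpos)
    simp only [abs_neg, neg_zero] at this
    exact this.symm
  exact hneg.trans hpos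

lemma integrableOn_abs_log_abs (b : ℝ) (hb : 0 < b) :
    IntegrableOn (fun t : ℝ => |Real.log (|t|)|) (Icc (-b) b) := by
  have := (intervalIntegrable_abs_log_abs b hb)
  rw [intervalIntegrable_iff_integrableOn_Icc_of_le (by linarith)] at this
  exact this



def F (x t : ℝ) : ℝ := if |t| ≤ x then 1/(2*x) else 0

lemma F_nonneg (x t : ℝ) : 0 ≤ F x t := by
  unfold F; split
  · have hx : (0:ℝ) ≤ x := le_trans (abs_nonneg t) (by assumption)
    positivity
  · exact le_refl _

lemma F_le (x t : ℝ) (ht : t ≠ 0) : F x t ≤ 1/(2*|t|) := by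
  unfold F
  have h0 : 0 < |t| := abs_pos.mpr ht
  split
  · rename_i h
    apply one_div_le_one_div_of_le (by positivity)
    linarith
  · positivity

lemma F_anti (x s t : ℝ) (hst : |s| ≤ |t|) : F x t ≤ F x s := by
  unfold F
  split
  · rw [if_pos (hst.trans (by assumption))]
  · split
    · rename_i h
      have hx : (0:ℝ) ≤ x := le_trans (abs_nonneg s) h
      positivity
    · exact le_refl _

lemma F_eval (x t : ℝ) (h : |t| ≤ x) : F x t = 1/(2*x) := if_pos h

lemma F_zero (x t : ℝ) (h : x < |t|) : F x t = 0 := if_neg (not_le.mpr h)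

lemma measurable_F : Measurable (fun p : ℝ × ℝ => ENNReal.ofReal (F p.1 p.2)) := by
  apply ENNReal.measurable_ofReal.comp
  unfold F
  exact Measurable.ite (measurableSet_le measurable_snd.abs measurable_fst)
    (measurable_const.div (measurable_fst.const_mul 2)) measurable_const

lemma measurable_F_right (t : ℝ) : Measurable (fun x => F x t) := by
  unfold F
  exact Measurable.ite (measurableSet_le measurable_const measurable_id)
    (measurable_const.div (measurable_id.const_mul 2)) measurable_const

def G (μ : Measure ℝ) (t : ℝ) : ENNReal := ∫⁻ x, ENNReal.ofReal (F x t) ∂μ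

lemma measurable_G (μ : Measure ℝ) [SFinite μ] : Measurable (G μ) := by
  exact Measurable.lintegral_prod_right' (f := fun p : ℝ × ℝ => ENNReal.ofReal (F p.2 p.1))
    (measurable_F.comp measurable_swap)

lemma integral_eq_G (μ : Measure ℝ) (t : ℝ) :
    (∫ x, F x t ∂μ) = (G μ t).toReal := by
  rw [integral_eq_lintegral_of_nonneg_ae (Filter.Eventually.of_forall fun x => F_nonneg x t)
    (measurable_F_right t).aestronglyMeasurable]
  rfl

lemma G_le (μ : Measure ℝ) [IsProbabilityMeasure μ] (t : ℝ) (ht : t ≠ 0) :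
    G μ t ≤ ENNReal.ofReal (1/(2*|t|)) := by
  calc G μ t ≤ ∫⁻ _, ENNReal.ofReal (1/(2*|t|)) ∂μ :=
        lintegral_mono fun x => ENNReal.ofReal_le_ofReal (F_le x t ht)
    _ = ENNReal.ofReal (1/(2*|t|)) := by simp

lemma G_ne_top (μ : Measure ℝ) [IsProbabilityMeasure μ] (t : ℝ) (ht : t ≠ 0) :
    G μ t ≠ ⊤ :=
  ne_top_of_le_ne_top ENNReal.ofReal_ne_top (G_le μ t ht)

lemma G_anti (μ : Measure ℝ) (s t : ℝ) (hst : |s| ≤ |t|) : G μ t ≤ G μ s :=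
  lintegral_mono fun x => ENNReal.ofReal_le_ofReal (F_anti x s t hst)

lemma G_lower (μ : Measure ℝ) (c ε t : ℝ) (hc : 0 < c) (hμ : ENNReal.ofReal ε ≤ μ {c})
    (ht : |t| ≤ c) : ENNReal.ofReal (ε * (1/(2*c))) ≤ G μ t := by
  have h1 : ∫⁻ x in {c}, ENNReal.ofReal (F x t) ∂μ ≤ G μ t :=
    setLIntegral_le_lintegral _ _
  rw [lintegral_singleton] at h1
  rw [F_eval c t ht] at h1
  calc ENNReal.ofReal (ε * (1/(2*c))) = ENNReal.ofReal (1/(2*c)) * ENNReal.ofReal ε := by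
        rw [mul_comm, ENNReal.ofReal_mul (by positivity)]
    _ ≤ ENNReal.ofReal (1/(2*c)) * μ {c} := by gcongr
    _ ≤ G μ t := h1

lemma G_zero (μ : Measure ℝ) (r t : ℝ) (hμ : μ ((Icc 0 r)ᶜ) = 0) (ht : r < |t|) :
    G μ t = 0 := by
  have hae : ∀ᵐ x ∂μ, x ∈ Icc 0 r := by
    rw [ae_iff]
    convert hμ using 2
    ext x; simp
  rw [G, lintegral_eq_zero_iff ((measurable_F_right t).ennreal_ofReal)]
  filter_upwards [hae] with x hx
  have : x < |t| := lt_of_le_of_lt hx.2 ht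
  simp [F_zero x t this]

-- real layer
def gE (μ : Measure ℝ) (t : ℝ) : ℝ := (G μ t).toReal

lemma gE_nonneg (μ : Measure ℝ) (t : ℝ) : 0 ≤ gE μ t := ENNReal.toReal_nonneg

lemma gE_le (μ : Measure ℝ) [IsProbabilityMeasure μ] (t : ℝ) (ht : t ≠ 0) :
    gE μ t ≤ 1/(2*|t|) := by
  have := G_le μ t ht
  exact ENNReal.toReal_le_of_le_ofReal (by positivity) this

lemma gE_lower (μ : Measure ℝ) [IsProbabilityMeasure μ] (c ε t : ℝ) (hc : 0 < c) (hε : 0 ≤ ε)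
    (hμ : ENNReal.ofReal ε ≤ μ {c}) (ht : |t| ≤ c) (ht0 : t ≠ 0) :
    ε * (1/(2*c)) ≤ gE μ t := by
  have h := ENNReal.toReal_mono (G_ne_top μ t ht0) (G_lower μ c ε t hc hμ ht)
  rwa [ENNReal.toReal_ofReal (by positivity)] at h

lemma gE_anti (μ : Measure ℝ) [IsProbabilityMeasure μ] (s t : ℝ) (hs : s ≠ 0)
    (hst : |s| ≤ |t|) : gE μ t ≤ gE μ s :=
  ENNReal.toReal_mono (G_ne_top μ s hs) (G_anti μ s t hst)


lemma move_lintegral (ρ ρ' : Measure ℝ) (ε a a' : ℝ)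
    (hmove : ρ' + (ENNReal.ofReal ε) • Measure.dirac a = ρ + (ENNReal.ofReal ε) • Measure.dirac a')
    (f : ℝ → ENNReal) (hf : Measurable f) :
    ∫⁻ x, f x ∂ρ' + ENNReal.ofReal ε * f a = ∫⁻ x, f x ∂ρ + ENNReal.ofReal ε * f a' := by
  have h1 := congrArg (fun μ => ∫⁻ x, f x ∂μ) hmove
  simpa [lintegral_add_measure, lintegral_smul_measure, lintegral_dirac' _ hf, mul_comm] using h1

lemma move_atom (ρ ρ' : Measure ℝ) (ε a a' : ℝ) (hne : a ≠ a')
    (hmove : ρ' + (ENNReal.ofReal ε) • Measure.dirac a = ρ + (ENNReal.ofReal ε) • Measure.dirac a') :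
    ENNReal.ofReal ε ≤ ρ' {a'} := by
  have h1 := congrArg (fun μ => μ {a'}) hmove
  simp only [Measure.add_apply, Measure.smul_apply, smul_eq_mul] at h1
  rw [Measure.dirac_apply' _ (measurableSet_singleton a'),
      Measure.dirac_apply' _ (measurableSet_singleton a')] at h1
  simp [Set.indicator_of_notMem, hne] at h1
  rw [h1]
  exact le_add_self

lemma move_compl_null (ρ ρ' : Measure ℝ) (ε a a' r : ℝ) [IsProbabilityMeasure ρ]
    (h0 : 0 ≤ a') (hr : a' ≤ r) (hsupp : ρ (Icc 0 r) = 1)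
    (hmove : ρ' + (ENNReal.ofReal ε) • Measure.dirac a = ρ + (ENNReal.ofReal ε) • Measure.dirac a') :
    ρ' ((Icc 0 r)ᶜ) = 0 := by
  have hρ : ρ ((Icc 0 r)ᶜ) = 0 := by
    rw [measure_compl measurableSet_Icc (measure_ne_top _ _), hsupp, measure_univ]
    simp
  have h1 := congrArg (fun μ => μ ((Icc 0 r)ᶜ)) hmove
  simp only [Measure.add_apply, Measure.smul_apply, smul_eq_mul] at h1
  rw [Measure.dirac_apply' _ measurableSet_Icc.compl, Measure.dirac_apply' _ measurableSet_Icc.compl]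
    at h1
  have ha' : ¬ a' ∈ (Icc 0 r)ᶜ := by simp [notMem_compl_iff]; exact ⟨h0, hr⟩
  rw [Set.indicator_of_notMem ha', hρ] at h1
  simp only [mul_zero, zero_add, add_eq_zero] at h1
  exact h1.1

lemma move_real (ρ ρ' : Measure ℝ) (ε a a' : ℝ) (hε : 0 ≤ ε)
    [IsProbabilityMeasure ρ] [IsProbabilityMeasure ρ']
    (hmove : ρ' + (ENNReal.ofReal ε) • Measure.dirac a = ρ + (ENNReal.ofReal ε) • Measure.dirac a')
    (t : ℝ) (ht : t ≠ 0) :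
    gE ρ' t + ε * F a t = gE ρ t + ε * F a' t := by
  have h1 := move_lintegral ρ ρ' ε a a' hmove (fun x => ENNReal.ofReal (F x t))
    ((measurable_F_right t).ennreal_ofReal)
  have h2 := congrArg ENNReal.toReal h1
  rw [show (∫⁻ (x : ℝ), ENNReal.ofReal (F x t) ∂ρ') = G ρ' t from rfl,
      show (∫⁻ (x : ℝ), ENNReal.ofReal (F x t) ∂ρ) = G ρ t from rfl] at h2
  have hfin : ∀ (c : ℝ), ENNReal.ofReal ε * ENNReal.ofReal (F c t) ≠ ⊤ :=
    fun c => ENNReal.mul_ne_top ENNReal.ofReal_ne_top ENNReal.ofReal_ne_top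
  rw [ENNReal.toReal_add (G_ne_top ρ' t ht) (hfin a),
      ENNReal.toReal_add (G_ne_top ρ t ht) (hfin a')] at h2
  simp only [ENNReal.toReal_mul, ENNReal.toReal_ofReal hε,
    ENNReal.toReal_ofReal (F_nonneg _ t)] at h2
  exact h2

lemma F_mul_integral (c : ℝ) (hc : 0 < c) (H : ℝ → ℝ) (hint : IntegrableOn H (Icc (-c) c)) :
    Integrable (fun t => F c t * H t) volume ∧
    ∫ t, F c t * H t = (1/(2*c)) * ∫ t in Icc (-c) c, H t := by
  have heq : (fun t => F c t * H t)
      = Set.indicator (Icc (-c) c) (fun t => (1/(2*c)) * H t) := by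
    funext t
    by_cases h : |t| ≤ c
    · rw [F_eval c t h, Set.indicator_of_mem (mem_Icc.mpr (abs_le.mp h))]
    · rw [F_zero c t (not_le.mp h), Set.indicator_of_notMem, zero_mul]
      intro hm
      exact h (abs_le.mpr (mem_Icc.mp hm))
  constructor
  · rw [heq, integrable_indicator_iff measurableSet_Icc]
    exact (hint.const_mul _)
  · rw [heq, integral_indicator measurableSet_Icc, integral_const_mul]

lemma avg_mono (a a' m : ℝ) (ha : 0 < a) (haa' : a < a') (h : ℝ → ℝ)
    (hint : IntegrableOn h (Icc (-a') a'))
    (hlow : ∀ t, t ≠ 0 → |t| ≤ a → m ≤ h t)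
    (hhigh : ∀ t, a ≤ |t| → |t| ≤ a' → h t ≤ m) :
    (1/(2*a')) * ∫ t in Icc (-a') a', h t ≤ (1/(2*a)) * ∫ t in Icc (-a) a, h t := by
  set A : Set ℝ := Icc (-a) a with hA
  set A' : Set ℝ := Icc (-a') a' with hA'
  set S : Set ℝ := A' \ A with hS
  have hsub : A ⊆ A' := Icc_subset_Icc (by linarith) (by linarith)
  have hintA : IntegrableOn h A := hint.mono_set hsub
  have hintS : IntegrableOn h S := hint.mono_set diff_subset
  have hxA : ∀ x ∈ A, |x| ≤ a := fun x hx => abs_le.mpr ⟨hx.1, hx.2⟩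
  have hxS : ∀ x ∈ S, a ≤ |x| ∧ |x| ≤ a' := by
    intro x hx
    constructor
    · by_contra hc
      exact hx.2 (abs_le.mp (le_of_not_ge hc) |> fun ⟨u,v⟩ => ⟨u, v⟩)
    · exact abs_le.mpr ⟨hx.1.1, hx.1.2⟩
  have hvolA : (volume A).toReal = 2*a := by
    rw [hA, Real.volume_Icc, ENNReal.toReal_ofReal (by linarith)]; ring
  have hvolS : (volume S).toReal = 2*a' - 2*a := by
    rw [hS, measure_diff hsub measurableSet_Icc.nullMeasurableSet (by
      rw [hA, Real.volume_Icc]; exact ENNReal.ofReal_ne_top)]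
    rw [hA, hA', Real.volume_Icc, Real.volume_Icc,
      ENNReal.toReal_sub_of_le (ENNReal.ofReal_le_ofReal (by linarith)) ENNReal.ofReal_ne_top,
      ENNReal.toReal_ofReal (by linarith), ENNReal.toReal_ofReal (by linarith)]
    ring
  have hIS : ∫ t in S, h t ≤ (2*a' - 2*a) * m := by
    have := setIntegral_mono_on hintS ((integrableOn_const_iff).mpr (Or.inr (by
      rw [hS]; exact lt_of_le_of_lt (measure_mono diff_subset) (by
        rw [hA', Real.volume_Icc]; exact ENNReal.ofReal_lt_top)))) 
      (measurableSet_Icc.diff measurableSet_Icc)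
      (fun x hx => hhigh x (hxS x hx).1 (hxS x hx).2)
    rwa [setIntegral_const, smul_eq_mul, measureReal_def, hvolS] at this
  have hIA : 2*a * m ≤ ∫ t in A, h t := by
    have := setIntegral_mono_on_ae (f := fun _ => m) (g := h) ((integrableOn_const_iff).mpr (Or.inr (by
        rw [hA, Real.volume_Icc]; exact ENNReal.ofReal_lt_top))) hintA measurableSet_Icc ?_
    · rwa [setIntegral_const, smul_eq_mul, measureReal_def, hvolA] at this
    · have h0 : ∀ᵐ x : ℝ, x ≠ 0 := by
        refine (ae_iff).mpr ?_
        simpa using volume_singleton (a := (0:ℝ))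
      filter_upwards [h0] with x hx hxA'
      exact hlow x hx (hxA x hxA')
  have hsplit : ∫ t in A', h t = (∫ t in A, h t) + ∫ t in S, h t := by
    rw [← setIntegral_union (disjoint_sdiff_right) (measurableSet_Icc.diff measurableSet_Icc)
      hintA hintS, union_diff_cancel hsub]
  rw [hsplit]
  have hm2 : a * (∫ t in S, h t) ≤ (a' - a) * ∫ t in A, h t := by
    nlinarith [hIS, hIA]
  rw [div_mul_eq_mul_div, div_mul_eq_mul_div, div_le_div_iff₀ (by linarith) (by linarith)]
  nlinarith [hm2]

lemma measurable_F_left (x : ℝ) : Measurable (F x) := by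
  unfold F
  exact Measurable.ite (measurableSet_le measurable_abs measurable_const)
    measurable_const measurable_const

lemma ae_ne_zero : ∀ᵐ t : ℝ ∂(volume : Measure ℝ), t ≠ 0 := by
  refine (ae_iff).mpr ?_
  simpa using volume_singleton (a := (0:ℝ))

lemma log_abs_bound (c0 w t : ℝ) (hc0 : 0 < c0) (hw : c0 ≤ w) (ht : t ≠ 0)
    (hub : w ≤ 1/(2*|t|)) :
    |Real.log w| ≤ |Real.log c0| + Real.log 2 + |Real.log (|t|)| := by
  have h1 : Real.log c0 ≤ Real.log w := Real.log_le_log hc0 hw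
  have h2 : Real.log w ≤ Real.log (1/(2*|t|)) := Real.log_le_log (lt_of_lt_of_le hc0 hw) hub
  have h3 : Real.log (1/(2*|t|)) = -(Real.log 2 + Real.log (|t|)) := by
    rw [one_div, Real.log_inv, Real.log_mul two_ne_zero (abs_ne_zero.mpr ht)]
  rw [h3] at h2
  have h4 := neg_abs_le (Real.log c0)
  have h5 := neg_abs_le (Real.log (|t|))
  have h6 := le_abs_self (Real.log (|t|))
  have h7 : (0:ℝ) ≤ Real.log 2 := Real.log_nonneg one_le_two
  rw [abs_le]
  constructor <;> linarith [le_abs_self (Real.log c0)]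

end RMTaux

open RMTaux Set in
set_option maxHeartbeats 2000000 in
/-- Moving mass of the radial distribution `ρ` outward (from `α` to `α' > α`)
cannot decrease the differential entropy of the density
`g(t) = ∫ (1/(2a)) 1{|t| ≤ a} dρ(a)`. -/
theorem radial_mass_transport_entropy_mono
    (r a a' ε : ℝ) (ha : 0 < a) (haa' : a < a') (ha'r : a' ≤ r) (hε : 0 < ε)
    (ρ ρ' : Measure ℝ) [IsProbabilityMeasure ρ] [IsProbabilityMeasure ρ']
    (hsupp : ρ (Set.Icc 0 r) = 1)
    (hmass : ENNReal.ofReal ε ≤ ρ {a})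
    (hmove : ρ' + (ENNReal.ofReal ε) • Measure.dirac a
      = ρ + (ENNReal.ofReal ε) • Measure.dirac a')
    (g g' : ℝ → ℝ)
    (hg : ∀ t, g t = ∫ x, (if |t| ≤ x then 1 / (2 * x) else 0) ∂ρ)
    (hg' : ∀ t, g' t = ∫ x, (if |t| ≤ x then 1 / (2 * x) else 0) ∂ρ') :
    ∫ t, Real.negMulLog (g t) ≤ ∫ t, Real.negMulLog (g' t) := by
  classical
  have ha' : 0 < a' := ha.trans haa'
  have hane : a ≠ a' := ne_of_lt haa'
  set u : ℝ → ℝ := gE ρ with hu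
  set v : ℝ → ℝ := gE ρ' with hv
  have hgu : ∀ t, g t = u t := fun t => by
    rw [hg t, show (∫ x, (if |t| ≤ x then 1 / (2 * x) else 0) ∂ρ) = ∫ x, F x t ∂ρ from rfl,
      integral_eq_G]; rfl
  have hgv : ∀ t, g' t = v t := fun t => by
    rw [hg' t, show (∫ x, (if |t| ≤ x then 1 / (2 * x) else 0) ∂ρ') = ∫ x, F x t ∂ρ' from rfl,
      integral_eq_G]; rfl
  have hρ'a' : ENNReal.ofReal ε ≤ ρ' {a'} := move_atom ρ ρ' ε a a' hane hmove
  have hRmove : ∀ t, t ≠ 0 → v t + ε * F a t = u t + ε * F a' t :=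
    move_real ρ ρ' ε a a' hε.le hmove
  set c0 : ℝ := ε * (1/(2*a')) with hc0
  have hc0pos : 0 < c0 := by positivity
  have hu0 : ∀ t, 0 ≤ u t := fun t => gE_nonneg ρ t
  have hv0 : ∀ t, 0 ≤ v t := fun t => gE_nonneg ρ' t
  have hvlow : ∀ t, t ≠ 0 → |t| ≤ a' → c0 ≤ v t := fun t ht htle =>
    gE_lower ρ' a' ε t ha' hε.le hρ'a' htle ht
  have hulow : ∀ t, t ≠ 0 → |t| ≤ a → ε * (1/(2*a)) ≤ u t := fun t ht htle =>
    gE_lower ρ a ε t ha hε.le hmass htle ht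
  have hvub : ∀ t, t ≠ 0 → v t ≤ 1/(2*|t|) := fun t ht => gE_le ρ' t ht
  have huub : ∀ t, t ≠ 0 → u t ≤ 1/(2*|t|) := fun t ht => gE_le ρ t ht
  set c1 : ℝ := ε * (1/(2*a)) - ε * (1/(2*a')) with hc1
  have hc1pos : 0 < c1 := by
    rw [hc1]
    have : 1/(2*a') < 1/(2*a) := by
      apply one_div_lt_one_div_of_lt (by positivity)
      linarith
    nlinarith
  have hcase1 : ∀ t, t ≠ 0 → |t| ≤ a → v t = u t - c1 := by
    intro t ht h1
    have h2 := hRmove t ht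
    rw [F_eval a t h1, F_eval a' t (h1.trans haa'.le)] at h2
    rw [hc1]; linarith
  have hcase2 : ∀ t, a < |t| → |t| ≤ a' → v t = u t + ε * (1/(2*a')) := by
    intro t h1 h2
    have ht : t ≠ 0 := by
      intro h; rw [h] at h1; simp at h1; linarith
    have h3 := hRmove t ht
    rw [F_zero a t h1, F_eval a' t h2] at h3
    linarith
  have hcase3 : ∀ t, a' < |t| → v t = u t := by
    intro t h1
    have ht : t ≠ 0 := by
      intro h; rw [h] at h1; simp at h1; linarith
    have h3 := hRmove t ht
    rw [F_zero a t (haa'.trans h1), F_zero a' t h1] at h3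
    linarith
  set D : ℝ → ℝ := fun t => Real.negMulLog (v t) - Real.negMulLog (u t) with hD
  set H : ℝ → ℝ := fun t => Real.log (v t) + 1 with hH
  set ψ : ℝ → ℝ := fun t => (ε * F a t - ε * F a' t) * H t with hψ
  have hψdef : ∀ t, ψ t = (ε * F a t - ε * F a' t) * H t := fun t => rfl
  have hDdef : ∀ t, D t = Real.negMulLog (v t) - Real.negMulLog (u t) := fun t => rfl
  have hHdef : ∀ t, H t = Real.log (v t) + 1 := fun t => rfl
  -- pointwise inequality ψ ≤ D away from 0
  have hψD : ∀ t, t ≠ 0 → ψ t ≤ D t := by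
    intro t ht
    by_cases h1 : |t| ≤ a'
    · have hx : 0 < v t := lt_of_lt_of_le hc0pos (hvlow t ht h1)
      have hgib := gibbs (v t) (u t) hx (hu0 t)
      have hdiff : u t - v t = ε * F a t - ε * F a' t := by
        have := hRmove t ht; linarith
      have h5 : ψ t = (u t - v t) * H t := by rw [hψdef, ← hdiff]
      have h6 : (v t - u t) * (Real.log (v t) + 1) = -((u t - v t) * H t) := by
        rw [hHdef]; ring
      rw [h5, hDdef]
      rw [h6] at hgib
      linarith
    · have h2 : a' < |t| := not_le.mp h1
      have h3 := hcase3 t h2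
      have hFa : F a t = 0 := F_zero a t (haa'.trans h2)
      have hFa' : F a' t = 0 := F_zero a' t h2
      rw [hψdef, hDdef, h3, hFa, hFa']; ring_nf; simp
  -- measurability
  have hmeasu : Measurable u := (measurable_G ρ).ennreal_toReal
  have hmeasv : Measurable v := (measurable_G ρ').ennreal_toReal
  have hmeasD : Measurable D :=
    (Real.continuous_negMulLog.measurable.comp hmeasv).sub
      (Real.continuous_negMulLog.measurable.comp hmeasu)
  have hmeasH : Measurable H := (Real.measurable_log.comp hmeasv).add measurable_const
  -- integrability of H on the interval
  have hφint : IntegrableOn (fun t : ℝ => |Real.log (|t|)|) (Icc (-a') a') :=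
    integrableOn_abs_log_abs a' ha'
  have hconstint : ∀ c : ℝ, IntegrableOn (fun _ : ℝ => c) (Icc (-a') a') :=
    fun c => (integrableOn_const_iff).mpr (Or.inr (by rw [Real.volume_Icc]; exact ENNReal.ofReal_lt_top))
  have hHbnd : ∀ t, t ≠ 0 → |t| ≤ a' →
      |H t| ≤ (1 + |Real.log c0| + Real.log 2) + |Real.log (|t|)| := by
    intro t ht h1
    have := log_abs_bound c0 (v t) t hc0pos (hvlow t ht h1) ht (hvub t ht)
    calc |H t| ≤ |Real.log (v t)| + 1 := by rw [hHdef]; exact (abs_add_le _ _).trans (by simp)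
      _ ≤ (1 + |Real.log c0| + Real.log 2) + |Real.log (|t|)| := by linarith
  have hHint : IntegrableOn H (Icc (-a') a') := by
    apply Integrable.mono' ((hconstint (1 + |Real.log c0| + Real.log 2)).add hφint)
      hmeasH.aestronglyMeasurable.restrict
    rw [ae_restrict_iff' measurableSet_Icc]
    filter_upwards [ae_ne_zero] with t ht hmem
    exact hHbnd t ht (abs_le.mpr ⟨hmem.1, hmem.2⟩)
  -- integral of ψ
  obtain ⟨hFaint, hFaval⟩ := F_mul_integral a ha H
    (hHint.mono_set (Icc_subset_Icc (by linarith) (by linarith)))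
  obtain ⟨hFa'int, hFa'val⟩ := F_mul_integral a' ha' H hHint
  have hψeq : ψ = fun t => ε * (F a t * H t) - ε * (F a' t * H t) := funext fun t => by
    rw [hψdef]; ring
  have hψint : Integrable ψ := by
    rw [hψeq]; exact (hFaint.const_mul ε).sub (hFa'int.const_mul ε)
  have hψval : ∫ t, ψ t
      = ε * ((1/(2*a)) * ∫ t in Icc (-a) a, H t) - ε * ((1/(2*a')) * ∫ t in Icc (-a') a', H t) := by
    rw [hψeq, integral_sub (hFaint.const_mul ε) (hFa'int.const_mul ε),
      integral_const_mul, integral_const_mul, hFaval, hFa'val]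
  have hva : 0 < v a := lt_of_lt_of_le hc0pos
    (hvlow a ha.ne' (by rw [abs_of_pos ha]; linarith))
  have havg := avg_mono a a' (Real.log (v a) + 1) ha haa' H hHint ?_ ?_
  · have hψnonneg : 0 ≤ ∫ t, ψ t := by
      rw [hψval]
      nlinarith [mul_le_mul_of_nonneg_left havg hε.le]
    -- bound on D and integrability
    set M : ℝ := 1/(2*a) with hM
    set Cb : ℝ := c1*(1 + 2*|Real.log c0| + Real.log 2) + (2 + 2*M^2) with hCb
    have hlog2 : (0:ℝ) ≤ Real.log 2 := Real.log_nonneg one_le_two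
    have hDbound : ∀ t, t ≠ 0 → |D t| ≤ Cb + c1 * |Real.log (|t|)| := by
      intro t ht
      have habs0 : (0:ℝ) ≤ |Real.log (|t|)| := abs_nonneg _
      rcases le_or_gt (|t|) a with h1 | h1
      · have hvt := hcase1 t ht h1
        have hvc0 := hvlow t ht (h1.trans haa'.le)
        have huu : u t ≤ 1/(2*|t|) := huub t ht
        have hvu : v t ≤ u t := by rw [hvt]; linarith
        have hkey := negMulLog_diff_le c0 (u t) (v t) hc0pos hvc0 hvu
        have hlogu := log_abs_bound c0 (u t) t hc0pos (hvc0.trans hvu) ht huu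
        have huv : u t - v t = c1 := by rw [hvt]; ring
        rw [huv] at hkey
        have hDabs : |D t| = |Real.negMulLog (u t) - Real.negMulLog (v t)| := by
          rw [hDdef]; exact abs_sub_comm _ _
        rw [hDabs]
        have hM2 : (0:ℝ) ≤ 2 + 2*M^2 := by positivity
        calc |Real.negMulLog (u t) - Real.negMulLog (v t)|
            ≤ c1 * (1 + |Real.log c0| + |Real.log (u t)|) := hkey
          _ ≤ c1 * (1 + 2*|Real.log c0| + Real.log 2 + |Real.log (|t|)|) :=
              mul_le_mul_of_nonneg_left (by linarith) hc1pos.le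
          _ ≤ Cb + c1 * |Real.log (|t|)| := by
              rw [hCb]
              have hM2' : (0:ℝ) ≤ 2 + 2*M^2 := by positivity
              nlinarith
      · rcases le_or_gt (|t|) a' with h2 | h2
        · have hvt := hcase2 t h1 h2
          have hta : 1/(2*|t|) ≤ M := by
            rw [hM]; apply one_div_le_one_div_of_le (by positivity); linarith
          have huM : u t ≤ M := (huub t ht).trans hta
          have hvM : v t ≤ M := (hvub t ht).trans hta
          have hbu := negMulLog_abs_le (u t) (hu0 t)
          have hbv := negMulLog_abs_le (v t) (hv0 t)
          have : |D t| ≤ |Real.negMulLog (v t)| + |Real.negMulLog (u t)| := by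
            rw [hDdef]; exact abs_sub _ _
          have hMpos : 0 < M := by rw [hM]; positivity
          have hc1' : (0:ℝ) ≤ c1 * (1 + 2*|Real.log c0| + Real.log 2) := by
            have := abs_nonneg (Real.log c0); nlinarith
          calc |D t| ≤ |Real.negMulLog (v t)| + |Real.negMulLog (u t)| := this
            _ ≤ 2 + (u t)^2 + (v t)^2 := by linarith
            _ ≤ 2 + 2*M^2 := by nlinarith [hu0 t, hv0 t]
            _ ≤ Cb + c1 * |Real.log (|t|)| := by rw [hCb]; nlinarith
        · have h3 := hcase3 t h2
          have hd0 : D t = 0 := by rw [hDdef, h3]; ring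
          rw [hd0, abs_zero, hCb]
          nlinarith [abs_nonneg (Real.log c0), mul_nonneg hc1pos.le habs0, hlog2,
            sq_nonneg M, hc1pos.le]
    have hDzero : ∀ t, t ∉ Icc (-a') a' → D t = 0 := by
      intro t hmem
      have : a' < |t| := by
        rcases abs_cases t with ⟨he, _⟩ | ⟨he, _⟩ <;> rw [he] <;> by_contra hc <;>
          exact hmem (mem_Icc.mpr (by constructor <;> linarith))
      rw [hDdef, hcase3 t this]; ring
    have hDindic : D = Set.indicator (Icc (-a') a') D := by
      funext t
      by_cases hmem : t ∈ Icc (-a') a'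
      · rw [Set.indicator_of_mem hmem]
      · rw [Set.indicator_of_notMem hmem, hDzero t hmem]
    have hDint : Integrable D := by
      rw [hDindic, integrable_indicator_iff measurableSet_Icc]
      apply Integrable.mono' ((hconstint Cb).add (hφint.const_mul c1))
        hmeasD.aestronglyMeasurable.restrict
      rw [ae_restrict_iff' measurableSet_Icc]
      filter_upwards [ae_ne_zero] with t ht _
      exact hDbound t ht
    have hDpos : 0 ≤ ∫ t, D t := by
      refine le_trans hψnonneg (integral_mono_ae hψint hDint ?_)
      filter_upwards [ae_ne_zero] with t ht
      exact hψD t ht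
    -- conclude
    have hgeq : (fun t => Real.negMulLog (g t)) = fun t => Real.negMulLog (u t) :=
      funext fun t => by rw [hgu]
    have hgeq' : (fun t => Real.negMulLog (g' t)) = fun t => Real.negMulLog (u t) + D t :=
      funext fun t => by rw [hgv, hDdef]; ring
    rw [show (∫ t, Real.negMulLog (g t)) = ∫ t, Real.negMulLog (u t) by rw [hgeq],
        show (∫ t, Real.negMulLog (g' t)) = ∫ t, (Real.negMulLog (u t) + D t) by rw [hgeq']]
    by_cases hK : Integrable (fun t => Real.negMulLog (u t)) volume
    · rw [integral_add hK hDint]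
      linarith
    · have hnI : ¬ Integrable (fun t => Real.negMulLog (u t) + D t) volume := by
        intro hI
        apply hK
        have h8 := hI.sub hDint
        have h9 : ((fun t => Real.negMulLog (u t) + D t) - D) = fun t => Real.negMulLog (u t) := by
          funext t; simp
        rwa [h9] at h8
      rw [integral_undef hK, integral_undef hnI]
  · -- hlow for avg_mono
    intro t ht h1
    have hmono : v a ≤ v t := gE_anti ρ' t a ht (by rw [abs_of_pos ha]; exact h1)
    have := Real.log_le_log hva hmono
    rw [hHdef]; linarith
  · -- hhigh
    intro t h1 h2
    have ht : t ≠ 0 := by intro h; rw [h] at h1; simp at h1; linarith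
    have hmono : v t ≤ v a := gE_anti ρ' a t ha.ne' (by rw [abs_of_pos ha]; exact h1)
    have hvt : 0 < v t := lt_of_lt_of_le hc0pos (hvlow t ht h2)
    have := Real.log_le_log hvt hmono
    rw [hHdef]; linarith

end
end

section
/- For any random vectors X ∈ R^{d_x}, Y ∈ R^{d_y}: sup over matrices A_x ∈ R^{d_x×d_x}, A_y ∈ R^{d_y×d_y} and vectors b_x, b_y of SI(A_xX + b_x; A_yY + b_y) equals sup_{(θ,φ) ∈ S^{d_x-1}×S^{d_y-1}} I(θᵀX; φᵀY). Moreover, if (θ*, φ*) attains the latter supremum, then the matrices A_x* with first row θ* and all other rows zero (and b_x = 0), and analogously A_y* with first row φ*, attain the former. -/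
open MeasureTheory ProbabilityTheory Real
open scoped ENNReal ProbabilityTheory

noncomputable section

open scoped Pointwise in
lemma sphereUnif_coord_ne_zero {d : ℕ} (hd : 0 < d) :
    ∀ᵐ θ ∂(sphereUnif d), θ (⟨0, hd⟩ : Fin d) ≠ 0 := by
  set i : Fin d := ⟨0, hd⟩
  have hclosed : IsClosed {x : Ed d | x i = 0} :=
    isClosed_eq (EuclideanSpace.proj i).continuous continuous_const
  have hmeas : MeasurableSet {x : Ed d | x i = 0} := hclosed.measurableSet
  rw [ae_iff]
  have : {θ : Ed d | ¬ θ i ≠ 0} = {x : Ed d | x i = 0} := by ext x; simp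
  rw [this, sphereUnif, if_neg hd.ne', Measure.smul_apply,
    Measure.map_apply measurable_subtype_coe hmeas]
  have hker : {x : Ed d | x i = 0}
      = (LinearMap.ker (EuclideanSpace.proj i : Ed d →L[ℝ] ℝ).toLinearMap : Set (Ed d)) := by
    ext x; simp [LinearMap.mem_ker]
  have hs' : MeasurableSet (Subtype.val ⁻¹' {x : Ed d | x i = 0} :
      Set (Metric.sphere (0 : Ed d) 1)) := measurable_subtype_coe hmeas
  rw [Measure.toSphere_apply' _ hs']
  have hsub : (Set.Ioo (0:ℝ) 1 • (Subtype.val '' (Subtype.val ⁻¹' {x : Ed d | x i = 0} :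
      Set (Metric.sphere (0 : Ed d) 1)))) ⊆ {x : Ed d | x i = 0} := by
    rintro y ⟨r, hr, x, hx, rfl⟩
    obtain ⟨u, hu, rfl⟩ := hx
    simp only [Set.mem_setOf_eq] at hu ⊢
    show r * (u : Ed d) i = 0
    rw [hu, mul_zero]
  have hnull : (volume : Measure (Ed d)) {x : Ed d | x i = 0} = 0 := by
    rw [hker]
    apply Measure.addHaar_submodule
    intro h
    have h1 : (EuclideanSpace.single i (1:ℝ) : Ed d) ∈
        (LinearMap.ker (EuclideanSpace.proj i : Ed d →L[ℝ] ℝ).toLinearMap) := by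
      rw [h]; trivial
    rw [LinearMap.mem_ker] at h1
    have : (EuclideanSpace.single i (1:ℝ) : Ed d) i = 0 := h1
    simp at this
  rw [measure_mono_null hsub hnull]
  simp

lemma klD_self {α : Type*} [MeasurableSpace α] (ν : Measure α) [SigmaFinite ν] :
    klD ν ν = 0 := by
  have h1 : llr ν ν =ᵐ[ν] 0 := by
    filter_upwards [Measure.rnDeriv_self ν] with x hx
    simp [llr, hx]
  rw [klD, if_pos ⟨Measure.AbsolutelyContinuous.rfl,
    (integrable_congr h1).2 (integrable_zero _ _ _)⟩, integral_congr_ae h1]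
  simp

lemma klD_map_equiv {α β : Type*} [MeasurableSpace α] [MeasurableSpace β]
    (e : α ≃ᵐ β) (μ ν : Measure α) [SigmaFinite μ] [SigmaFinite ν] :
    klD (μ.map e) (ν.map e) = klD μ ν := by
  have hme := e.measurableEmbedding
  have hac : μ.map e ≪ ν.map e ↔ μ ≪ ν := by
    constructor
    · intro h
      have h2 := h.map e.symm.measurable
      simpa [Measure.map_map e.symm.measurable e.measurable] using h2
    · intro h; exact h.map e.measurable
  by_cases hμν : μ ≪ ν
  · have hrn : (fun x ↦ (μ.map e).rnDeriv (ν.map e) (e x)) =ᵐ[μ] μ.rnDeriv ν :=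
      hμν.ae_le (hme.rnDeriv_map μ ν)
    have hllr : (fun x ↦ llr (μ.map e) (ν.map e) (e x)) =ᵐ[μ] llr μ ν := by
      filter_upwards [hrn] with x hx
      simp [llr, hx]
    have hint : Integrable (llr (μ.map e) (ν.map e)) (μ.map e)
        ↔ Integrable (llr μ ν) μ := by
      rw [integrable_map_equiv]
      exact integrable_congr hllr
    rw [klD, klD]
    by_cases hI : Integrable (llr μ ν) μ
    · rw [if_pos ⟨hac.2 hμν, hint.2 hI⟩, if_pos ⟨hμν, hI⟩,
        MeasureTheory.integral_map_equiv e, integral_congr_ae hllr]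
    · rw [if_neg (fun h => hI (hint.1 h.2)), if_neg (fun h => hI h.2)]
  · rw [klD, klD, if_neg (fun h => hμν (hac.1 h.1)), if_neg (fun h => hμν h.1)]

lemma MI_comp_equiv {Ω : Type*} [MeasurableSpace Ω] (μ : Measure Ω) [IsProbabilityMeasure μ]
    (e f : ℝ ≃ᵐ ℝ) (A B : Ω → ℝ) (hA : Measurable A) (hB : Measurable B) :
    MI μ (fun ω => e (A ω)) (fun ω => f (B ω)) = MI μ A B := by
  have h1 : (μ.map fun ω => (e (A ω), f (B ω)))
      = (μ.map fun ω => (A ω, B ω)).map (e.prodCongr f) := by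
    rw [Measure.map_map (e.prodCongr f).measurable (hA.prodMk hB)]
    rfl
  have h2 : ((μ.map fun ω => e (A ω)).prod (μ.map fun ω => f (B ω)))
      = ((μ.map A).prod (μ.map B)).map (e.prodCongr f) := by
    have : (Measure.map (⇑e ∘ A) μ).prod (Measure.map (⇑f ∘ B) μ)
        = ((μ.map A).prod (μ.map B)).map (Prod.map e f) := by
      rw [← Measure.map_map e.measurable hA, ← Measure.map_map f.measurable hB,
        Measure.map_prod_map _ _ e.measurable f.measurable]
    exact this
  haveI : IsProbabilityMeasure (μ.map fun ω => (A ω, B ω)) :=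
    Measure.isProbabilityMeasure_map (hA.prodMk hB).aemeasurable
  haveI : IsProbabilityMeasure (μ.map A) := Measure.isProbabilityMeasure_map hA.aemeasurable
  haveI : IsProbabilityMeasure (μ.map B) := Measure.isProbabilityMeasure_map hB.aemeasurable
  rw [MI, MI, h1, h2, klD_map_equiv]

lemma MI_const_left {Ω β : Type*} [MeasurableSpace Ω] [MeasurableSpace β]
    (μ : Measure Ω) [IsProbabilityMeasure μ] (c : ℝ) (B : Ω → β) (hB : Measurable B) :
    MI μ (fun _ => c) B = 0 := by
  haveI : IsProbabilityMeasure (μ.map B) := Measure.isProbabilityMeasure_map hB.aemeasurable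
  have h1 : (μ.map fun ω => (c, B ω)) = (μ.map B).map (Prod.mk c) :=
    (Measure.map_map measurable_prodMk_left hB).symm
  have h2 : (μ.map fun _ : Ω => c) = Measure.dirac c := by
    rw [Measure.map_const]; simp
  rw [MI, h1, h2, Measure.dirac_prod]
  exact klD_self _

lemma MI_const_right {Ω α : Type*} [MeasurableSpace Ω] [MeasurableSpace α]
    (μ : Measure Ω) [IsProbabilityMeasure μ] (c : ℝ) (A : Ω → α) (hA : Measurable A) :
    MI μ A (fun _ => c) = 0 := by
  haveI : IsProbabilityMeasure (μ.map A) := Measure.isProbabilityMeasure_map hA.aemeasurable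
  have h1 : (μ.map fun ω => (A ω, c)) = (μ.map A).map (fun a => (a, c)) :=
    (Measure.map_map measurable_prodMk_right hA).symm
  have h2 : (μ.map fun _ : Ω => c) = Measure.dirac c := by
    rw [Measure.map_const]; simp
  rw [MI, h1, h2, Measure.prod_dirac]
  exact klD_self _

def affEquiv (s : ℝ) (hs : s ≠ 0) (c : ℝ) : ℝ ≃ᵐ ℝ :=
  ((Homeomorph.mulLeft₀ s hs).trans (Homeomorph.addRight c)).toMeasurableEquiv

lemma affEquiv_apply (s : ℝ) (hs : s ≠ 0) (c x : ℝ) : affEquiv s hs c x = s * x + c := rfl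

open Matrix in
lemma inner_affine {d : ℕ} (A : Matrix (Fin d) (Fin d) ℝ) (b : Fin d → ℝ) (θ : Ed d) (x : Ed d) :
    (inner ℝ θ ((WithLp.equiv 2 (Fin d → ℝ)).symm (A.mulVec (fun i => x i) + b)) : ℝ)
      = (inner ℝ ((WithLp.equiv 2 (Fin d → ℝ)).symm (A.transpose.mulVec (fun i => θ i))) x : ℝ)
        + ∑ i, θ i * b i := by
  simp only [PiLp.inner_apply, RCLike.inner_apply, conj_trivial,
    WithLp.equiv_symm_apply, PiLp.toLp_apply, Pi.add_apply, Matrix.mulVec, dotProduct,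
    Matrix.transpose_apply, mul_add, add_mul, Finset.sum_add_distrib, Finset.sum_mul, Finset.mul_sum]
  congr 1
  · rw [Finset.sum_comm]
    refine Finset.sum_congr rfl fun i _ => ?_
    refine Finset.sum_congr rfl fun j _ => ?_
    ring
  · refine Finset.sum_congr rfl fun i _ => ?_
    ring

open Matrix in
lemma inner_rankone {d : ℕ} (hd : 0 < d) (θs : Ed d) (θ : Ed d) (x : Ed d) :
    (inner ℝ θ ((WithLp.equiv 2 (Fin d → ℝ)).symm
        ((Matrix.of fun i j => if (i : Fin d).val = 0 then θs j else 0).mulVec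
          fun i => x i)) : ℝ)
      = θ ⟨0, hd⟩ * (inner ℝ θs x : ℝ) := by
  simp only [PiLp.inner_apply, RCLike.inner_apply, conj_trivial,
    WithLp.equiv_symm_apply, PiLp.toLp_apply, Matrix.mulVec, dotProduct, Matrix.of_apply]
  rw [Finset.mul_sum]
  rw [Finset.sum_eq_single (⟨0, hd⟩ : Fin d)]
  · have h0 : ((⟨0, hd⟩ : Fin d) : ℕ) = 0 := rfl
    rw [Finset.sum_mul]
    refine Finset.sum_congr rfl fun i _ => ?_
    rw [if_pos h0]; ring
  · intro i _ hi
    have : (i : Fin d).val ≠ 0 := by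
      intro h; exact hi (Fin.ext h)
    simp [this]
  · simp

open Matrix in
lemma MI_slice_le {Ω : Type*} [MeasurableSpace Ω] {dx dy : ℕ}
    (μ : Measure Ω) [IsProbabilityMeasure μ]
    (X : Ω → Ed dx) (Y : Ω → Ed dy) (hX : Measurable X) (hY : Measurable Y)
    (Ax : Matrix (Fin dx) (Fin dx) ℝ) (Ay : Matrix (Fin dy) (Fin dy) ℝ)
    (bx : Fin dx → ℝ) (by' : Fin dy → ℝ) (θ : Ed dx) (φ : Ed dy) :
    MI μ (fun ω => (inner ℝ θ (((WithLp.equiv 2 (Fin dx → ℝ)).symm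
            (Ax.mulVec (fun i => X ω i) + bx)) : Ed dx) : ℝ))
        (fun ω => (inner ℝ φ (((WithLp.equiv 2 (Fin dy → ℝ)).symm
            (Ay.mulVec (fun i => Y ω i) + by')) : Ed dy) : ℝ))
      ≤ (⨆ θ' ∈ Metric.sphere (0 : Ed dx) 1, ⨆ φ' ∈ Metric.sphere (0 : Ed dy) 1,
          MI μ (fun ω => (inner ℝ θ' (X ω) : ℝ)) fun ω => (inner ℝ φ' (Y ω) : ℝ)) := by
  set wx : Ed dx := (WithLp.equiv 2 (Fin dx → ℝ)).symm (Ax.transpose.mulVec (fun i => θ i))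
  set wy : Ed dy := (WithLp.equiv 2 (Fin dy → ℝ)).symm (Ay.transpose.mulVec (fun i => φ i))
  set cx : ℝ := ∑ i, θ i * bx i
  set cy : ℝ := ∑ i, φ i * by' i
  have hx' : ∀ ω, (inner ℝ θ (((WithLp.equiv 2 (Fin dx → ℝ)).symm
      (Ax.mulVec (fun i => X ω i) + bx)) : Ed dx) : ℝ) = inner ℝ wx (X ω) + cx :=
    fun ω => inner_affine Ax bx θ (X ω)
  have hy' : ∀ ω, (inner ℝ φ (((WithLp.equiv 2 (Fin dy → ℝ)).symm
      (Ay.mulVec (fun i => Y ω i) + by')) : Ed dy) : ℝ) = inner ℝ wy (Y ω) + cy :=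
    fun ω => inner_affine Ay by' φ (Y ω)
  have hmx : Measurable fun ω => (inner ℝ wx (X ω) + cx : ℝ) :=
    (Measurable.inner measurable_const hX).add_const cx
  have hmy : Measurable fun ω => (inner ℝ wy (Y ω) + cy : ℝ) :=
    (Measurable.inner measurable_const hY).add_const cy
  by_cases hwx : wx = 0
  · have hfa : (fun ω => (inner ℝ θ (((WithLp.equiv 2 (Fin dx → ℝ)).symm
        (Ax.mulVec (fun i => X ω i) + bx)) : Ed dx) : ℝ)) = fun _ => cx := by
      funext ω; rw [hx' ω, hwx, inner_zero_left, zero_add]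
    have hfb : (fun ω => (inner ℝ φ (((WithLp.equiv 2 (Fin dy → ℝ)).symm
        (Ay.mulVec (fun i => Y ω i) + by')) : Ed dy) : ℝ))
        = fun ω => (inner ℝ wy (Y ω) + cy : ℝ) := funext fun ω => hy' ω
    rw [hfa, hfb, MI_const_left μ cx _ hmy]
    exact bot_le
  by_cases hwy : wy = 0
  · have hfa : (fun ω => (inner ℝ θ (((WithLp.equiv 2 (Fin dx → ℝ)).symm
        (Ax.mulVec (fun i => X ω i) + bx)) : Ed dx) : ℝ))
        = fun ω => (inner ℝ wx (X ω) + cx : ℝ) := funext fun ω => hx' ω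
    have hfb : (fun ω => (inner ℝ φ (((WithLp.equiv 2 (Fin dy → ℝ)).symm
        (Ay.mulVec (fun i => Y ω i) + by')) : Ed dy) : ℝ)) = fun _ => cy := by
      funext ω; rw [hy' ω, hwy, inner_zero_left, zero_add]
    rw [hfa, hfb, MI_const_right μ cy _ hmx]
    exact bot_le
  · set ux : Ed dx := ‖wx‖⁻¹ • wx
    set uy : Ed dy := ‖wy‖⁻¹ • wy
    have hnx : ‖wx‖ ≠ 0 := norm_ne_zero_iff.2 hwx
    have hny : ‖wy‖ ≠ 0 := norm_ne_zero_iff.2 hwy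
    have hux : ux ∈ Metric.sphere (0 : Ed dx) 1 := by
      rw [mem_sphere_zero_iff_norm, norm_smul, norm_inv, norm_norm, inv_mul_cancel₀ hnx]
    have huy : uy ∈ Metric.sphere (0 : Ed dy) 1 := by
      rw [mem_sphere_zero_iff_norm, norm_smul, norm_inv, norm_norm, inv_mul_cancel₀ hny]
    have hwux : wx = ‖wx‖ • ux := by rw [smul_smul, mul_inv_cancel₀ hnx, one_smul]
    have hwuy : wy = ‖wy‖ • uy := by rw [smul_smul, mul_inv_cancel₀ hny, one_smul]
    have hfa : (fun ω => (inner ℝ θ (((WithLp.equiv 2 (Fin dx → ℝ)).symm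
        (Ax.mulVec (fun i => X ω i) + bx)) : Ed dx) : ℝ))
        = fun ω => affEquiv ‖wx‖ hnx cx ((inner ℝ ux (X ω) : ℝ)) := by
      funext ω
      rw [hx' ω, affEquiv_apply]
      nth_rewrite 1 [hwux]
      rw [real_inner_smul_left]
    have hfb : (fun ω => (inner ℝ φ (((WithLp.equiv 2 (Fin dy → ℝ)).symm
        (Ay.mulVec (fun i => Y ω i) + by')) : Ed dy) : ℝ))
        = fun ω => affEquiv ‖wy‖ hny cy ((inner ℝ uy (Y ω) : ℝ)) := by
      funext ω
      rw [hy' ω, affEquiv_apply]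
      nth_rewrite 1 [hwuy]
      rw [real_inner_smul_left]
    rw [hfa, hfb, MI_comp_equiv μ _ _ _ _ (Measurable.inner measurable_const hX)
      (Measurable.inner measurable_const hY)]
    exact le_iSup₂_of_le ux hux (le_iSup₂_of_le uy huy le_rfl)

open Matrix in
lemma SMI_rankone {Ω : Type*} [MeasurableSpace Ω] {dx dy : ℕ} (hdx : 0 < dx) (hdy : 0 < dy)
    (μ : Measure Ω) [IsProbabilityMeasure μ]
    (X : Ω → Ed dx) (Y : Ω → Ed dy) (hX : Measurable X) (hY : Measurable Y)
    (θs : Ed dx) (φs : Ed dy) :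
    SMI μ
        (fun ω => ((WithLp.equiv 2 (Fin dx → ℝ)).symm
          ((Matrix.of fun i j => if (i : Fin dx).val = 0 then θs j else 0).mulVec
            fun i => X ω i) : Ed dx))
        (fun ω => ((WithLp.equiv 2 (Fin dy → ℝ)).symm
          ((Matrix.of fun i j => if (i : Fin dy).val = 0 then φs j else 0).mulVec
            fun i => Y ω i) : Ed dy))
      = MI μ (fun ω => (inner ℝ θs (X ω) : ℝ)) fun ω => (inner ℝ φs (Y ω) : ℝ) := by
  rw [SMI]
  have hout : ∀ᵐ θ ∂(sphereUnif dx), θ (⟨0, hdx⟩ : Fin dx) ≠ 0 := sphereUnif_coord_ne_zero hdx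
  have hinn : ∀ᵐ φ ∂(sphereUnif dy), φ (⟨0, hdy⟩ : Fin dy) ≠ 0 := sphereUnif_coord_ne_zero hdy
  rw [lintegral_congr_ae (g := fun _ => MI μ (fun ω => (inner ℝ θs (X ω) : ℝ))
      fun ω => (inner ℝ φs (Y ω) : ℝ)) ?_]
  · simp
  filter_upwards [hout] with θ hθ
  rw [lintegral_congr_ae (g := fun _ => MI μ (fun ω => (inner ℝ θs (X ω) : ℝ))
      fun ω => (inner ℝ φs (Y ω) : ℝ)) ?_]
  · simp
  filter_upwards [hinn] with φ hφ
  have hfa : (fun ω => (inner ℝ θ (((WithLp.equiv 2 (Fin dx → ℝ)).symm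
      ((Matrix.of fun i j => if (i : Fin dx).val = 0 then θs j else 0).mulVec
        fun i => X ω i)) : Ed dx) : ℝ))
      = fun ω => affEquiv _ hθ 0 ((inner ℝ θs (X ω) : ℝ)) := by
    funext ω
    rw [inner_rankone hdx θs θ (X ω), affEquiv_apply, add_zero]
  have hfb : (fun ω => (inner ℝ φ (((WithLp.equiv 2 (Fin dy → ℝ)).symm
      ((Matrix.of fun i j => if (i : Fin dy).val = 0 then φs j else 0).mulVec
        fun i => Y ω i)) : Ed dy) : ℝ))
      = fun ω => affEquiv _ hφ 0 ((inner ℝ φs (Y ω) : ℝ)) := by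
    funext ω
    rw [inner_rankone hdy φs φ (Y ω), affEquiv_apply, add_zero]
  rw [hfa, hfb, MI_comp_equiv μ _ _ _ _ (Measurable.inner measurable_const hX)
    (Measurable.inner measurable_const hY)]

open Matrix in
/-- The supremum of SMI over arbitrary affine transformations of `X` and `Y`
equals the supremum of projected MI over the unit spheres, and it is attained by the rank-one
matrices whose first row is an optimal slicing direction (with zero bias). -/
theorem smi_sup_linear_processing
    {Ω : Type*} [MeasurableSpace Ω] {dx dy : ℕ} (hdx : 0 < dx) (hdy : 0 < dy)
    (μ : Measure Ω) [IsProbabilityMeasure μ]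
    (X : Ω → Ed dx) (Y : Ω → Ed dy) (hX : Measurable X) (hY : Measurable Y) :
    (⨆ (Ax : Matrix (Fin dx) (Fin dx) ℝ) (Ay : Matrix (Fin dy) (Fin dy) ℝ)
        (bx : Fin dx → ℝ) (by' : Fin dy → ℝ),
        SMI μ
          (fun ω => ((WithLp.equiv 2 (Fin dx → ℝ)).symm
            (Ax.mulVec (fun i => X ω i) + bx) : Ed dx))
          (fun ω => ((WithLp.equiv 2 (Fin dy → ℝ)).symm
            (Ay.mulVec (fun i => Y ω i) + by') : Ed dy)))
      = (⨆ θ ∈ Metric.sphere (0 : Ed dx) 1, ⨆ φ ∈ Metric.sphere (0 : Ed dy) 1,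
          MI μ (fun ω => (inner ℝ θ (X ω) : ℝ)) fun ω => (inner ℝ φ (Y ω) : ℝ)) ∧
    ∀ θs ∈ Metric.sphere (0 : Ed dx) 1, ∀ φs ∈ Metric.sphere (0 : Ed dy) 1,
      (∀ θ ∈ Metric.sphere (0 : Ed dx) 1, ∀ φ ∈ Metric.sphere (0 : Ed dy) 1,
        MI μ (fun ω => (inner ℝ θ (X ω) : ℝ)) (fun ω => (inner ℝ φ (Y ω) : ℝ)) ≤
          MI μ (fun ω => (inner ℝ θs (X ω) : ℝ)) fun ω => (inner ℝ φs (Y ω) : ℝ)) →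
      SMI μ
          (fun ω => ((WithLp.equiv 2 (Fin dx → ℝ)).symm
            ((Matrix.of fun i j => if (i : Fin dx).val = 0 then θs j else 0).mulVec
              fun i => X ω i) : Ed dx))
          (fun ω => ((WithLp.equiv 2 (Fin dy → ℝ)).symm
            ((Matrix.of fun i j => if (i : Fin dy).val = 0 then φs j else 0).mulVec
              fun i => Y ω i) : Ed dy))
        = (⨆ θ ∈ Metric.sphere (0 : Ed dx) 1, ⨆ φ ∈ Metric.sphere (0 : Ed dy) 1,
            MI μ (fun ω => (inner ℝ θ (X ω) : ℝ)) fun ω => (inner ℝ φ (Y ω) : ℝ)) := by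
  constructor
  · apply le_antisymm
    · refine iSup_le fun Ax => iSup_le fun Ay => iSup_le fun bx => iSup_le fun by' => ?_
      rw [SMI]
      refine le_trans (lintegral_mono fun θ => lintegral_mono fun φ =>
        MI_slice_le μ X Y hX hY Ax Ay bx by' θ φ) ?_
      simp [lintegral_const]
    · refine iSup₂_le fun θ hθ => iSup₂_le fun φ hφ => ?_
      rw [← SMI_rankone hdx hdy μ X Y hX hY θ φ]
      refine le_iSup_of_le (Matrix.of fun i j => if (i : Fin dx).val = 0 then θ j else 0)
        (le_iSup_of_le (Matrix.of fun i j => if (i : Fin dy).val = 0 then φ j else 0)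
          (le_iSup_of_le 0 (le_iSup_of_le 0 (le_of_eq ?_))))
      simp only [add_zero]
  · intro θs hθs φs hφs hmax
    rw [SMI_rankone hdx hdy μ X Y hX hY θs φs]
    exact le_antisymm (le_iSup₂_of_le θs hθs (le_iSup₂_of_le φs hφs le_rfl))
      (iSup₂_le fun θ hθ => iSup₂_le fun φ hφ => hmax θ hθ φ hφ)


end
end
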